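/- Let m₁ < m₂ and τ, τ' > 0, and define A_τ := { (x,y) ∈ ℝ² : τ ≤ y, m₁x ≤ y, m₁(x - τ/m₂) ≥ y - τ }. Then ∫_{A_τ} dx dy/(xy) = ∫_{A_{τ'}} dx dy/(xy); that is, the integral is independent of τ. -/

import Mathlib

open MeasureTheory
open scoped ENNReal

private lemma strip_measurable (m₁ τ c : ℝ) :
    MeasurableSet {p : ℝ × ℝ | τ ≤ p.2 ∧ m₁ * p.1 ≤ p.2 ∧ p.2 - τ ≤ m₁ * (p.1 - c)} := by
  apply MeasurableSet.inter
  · exact measurableSet_le measurable_const measurable_snd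
  apply MeasurableSet.inter
  · exact measurableSet_le (measurable_fst.const_mul m₁) measurable_snd
  · exact measurableSet_le (measurable_snd.sub measurable_const)
      ((measurable_fst.sub measurable_const).const_mul m₁)

/-- The integral of `1/(xy)` over the strip `A_τ` is independent of `τ`. -/
theorem strip_integral_tau_independent (m₁ m₂ τ τ' : ℝ)
    (hm₁ : 0 < m₁) (hm₂ : 0 < m₂) (hm : m₁ < m₂) (hτ : 0 < τ) (hτ' : 0 < τ') :
    (∫⁻ p in {p : ℝ × ℝ | τ ≤ p.2 ∧ m₁ * p.1 ≤ p.2 ∧ p.2 - τ ≤ m₁ * (p.1 - τ / m₂)},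
        ENNReal.ofReal (1 / (p.1 * p.2))) =
      (∫⁻ p in {p : ℝ × ℝ | τ' ≤ p.2 ∧ m₁ * p.1 ≤ p.2 ∧ p.2 - τ' ≤ m₁ * (p.1 - τ' / m₂)},
        ENNReal.ofReal (1 / (p.1 * p.2))) := by
  set c : ℝ := τ' / τ with hc
  have hcpos : 0 < c := div_pos hτ' hτ
  have hcτ : c * τ = τ' := div_mul_cancel₀ τ' hτ.ne'
  set S := {p : ℝ × ℝ | τ ≤ p.2 ∧ m₁ * p.1 ≤ p.2 ∧ p.2 - τ ≤ m₁ * (p.1 - τ / m₂)} with hS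
  set S' := {p : ℝ × ℝ | τ' ≤ p.2 ∧ m₁ * p.1 ≤ p.2 ∧ p.2 - τ' ≤ m₁ * (p.1 - τ' / m₂)}
    with hS'
  have hS'm : MeasurableSet S' := strip_measurable m₁ τ' (τ' / m₂)
  have hg : Measurable fun p : ℝ × ℝ => ENNReal.ofReal (1 / (p.1 * p.2)) := by
    simp only [one_div]
    exact (measurable_fst.mul measurable_snd).inv.ennreal_ofReal
  have hsmul : Measurable fun p : ℝ × ℝ => c • p := measurable_const_smul c
  have hpre : (fun p : ℝ × ℝ => c • p) ⁻¹' S' = S := by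
    ext ⟨x, y⟩
    simp only [Set.mem_preimage, Prod.smul_mk, smul_eq_mul, hS, hS', Set.mem_setOf_eq]
    constructor
    · rintro ⟨h1, h2, h3⟩
      refine ⟨?_, ?_, ?_⟩
      · rw [← hcτ] at h1; exact le_of_mul_le_mul_left h1 hcpos
      · have h2' : c * (m₁ * x) ≤ c * y := by rw [mul_left_comm]; exact h2
        exact le_of_mul_le_mul_left h2' hcpos
      · rw [← hcτ] at h3
        have h3' : c * (y - τ) ≤ c * (m₁ * (x - τ / m₂)) := by
          calc c * (y - τ) = c * y - c * τ := by ring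
          _ ≤ m₁ * (c * x - c * τ / m₂) := h3
          _ = c * (m₁ * (x - τ / m₂)) := by ring
        exact le_of_mul_le_mul_left h3' hcpos
    · rintro ⟨h1, h2, h3⟩
      refine ⟨?_, ?_, ?_⟩
      · rw [← hcτ]; exact mul_le_mul_of_nonneg_left h1 hcpos.le
      · calc m₁ * (c * x) = c * (m₁ * x) := by ring
          _ ≤ c * y := mul_le_mul_of_nonneg_left h2 hcpos.le
      · rw [← hcτ]
        calc c * y - c * τ = c * (y - τ) := by ring
          _ ≤ c * (m₁ * (x - τ / m₂)) := mul_le_mul_of_nonneg_left h3 hcpos.le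
          _ = m₁ * (c * x - c * τ / m₂) := by ring
  have hfin : Module.finrank ℝ (ℝ × ℝ) = 2 := by
    simp [Module.finrank_prod]
  have hmap : (volume : Measure (ℝ × ℝ)).map (c • ·) =
      ENNReal.ofReal ((c ^ 2)⁻¹) • volume := by
    rw [Measure.map_addHaar_smul (volume : Measure (ℝ × ℝ)) hcpos.ne']
    congr 2
    rw [hfin]
    exact abs_of_pos (by positivity)
  have key : ENNReal.ofReal ((c ^ 2)⁻¹) *
        ∫⁻ p in S', ENNReal.ofReal (1 / (p.1 * p.2))
      = ∫⁻ p in S, ENNReal.ofReal (1 / ((c • p).1 * (c • p).2)) := by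
    rw [← smul_eq_mul (ENNReal.ofReal ((c ^ 2)⁻¹)), ← lintegral_smul_measure, ← Measure.restrict_smul, ← hmap,
      setLIntegral_map hS'm hg hsmul, hpre]
  have hintegrand : ∀ p : ℝ × ℝ,
      ENNReal.ofReal (1 / ((c • p).1 * (c • p).2)) =
        ENNReal.ofReal ((c ^ 2)⁻¹) * ENNReal.ofReal (1 / (p.1 * p.2)) := by
    intro ⟨x, y⟩
    simp only [Prod.smul_mk, smul_eq_mul]
    rw [← ENNReal.ofReal_mul (by positivity)]
    congr 1
    rw [one_div, one_div, ← mul_inv]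
    congr 1
    ring
  have key2 : ∫⁻ p in S, ENNReal.ofReal (1 / ((c • p).1 * (c • p).2))
      = ENNReal.ofReal ((c ^ 2)⁻¹) * ∫⁻ p in S, ENNReal.ofReal (1 / (p.1 * p.2)) := by
    simp_rw [hintegrand]
    rw [lintegral_const_mul _ hg]
  have hne : ENNReal.ofReal ((c ^ 2)⁻¹) ≠ 0 :=
    (ENNReal.ofReal_pos.mpr (by positivity)).ne'
  have hnetop : ENNReal.ofReal ((c ^ 2)⁻¹) ≠ ⊤ := ENNReal.ofReal_ne_top
  have := key.trans key2
  exact ((ENNReal.mul_right_inj hne hnetop).mp this).symm
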